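/- For every f ∈ ℝ^V there exists C ≥ 0 such that for all α ≥ C the ROF minimizer is the constant function equal to the mean of the datum: u_α(v) = (1/|V|) Σ_{w∈V} f(w) for every v ∈ V. -/

import Mathlib

open Finset MeasureTheory

noncomputable section

/-- The graph total variation `J(u) = ∑_{(v,w) ∈ E} |u(w) - u(v)|`. -/
def tvJ {V : Type*} (E : Finset (V × V)) (u : V → ℝ) : ℝ :=
  ∑ e ∈ E, |u e.2 - u e.1|

/-- The subdifferential of the graph total variation at `u`. -/
def subdiffJ {V : Type*} [Fintype V] (E : Finset (V × V)) (u : V → ℝ) : Set (V → ℝ) :=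
  {us | ∀ h : V → ℝ, (∑ v, (h v - u v) * us v) + tvJ E u ≤ tvJ E h}

/-- The divergence of an edge function `H`:
`(div H)(v) = ∑_{(w,v) ∈ E} H((w,v)) - ∑_{(v,w) ∈ E} H((v,w))`. -/
def gdiv {V : Type*} [DecidableEq V] (E : Finset (V × V)) (H : V × V → ℝ) : V → ℝ :=
  fun v => (∑ e ∈ E, if e.2 = v then H e else 0) - (∑ e ∈ E, if e.1 = v then H e else 0)

/-- The ℓ² norm on `ℝ^V`. -/
def norm2 {V : Type*} [Fintype V] (u : V → ℝ) : ℝ :=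
  Real.sqrt (∑ v, (u v) ^ 2)

/-- `u` minimizes `w ↦ ½‖f - w‖₂² + α J(w)` over `ℝ^V`. -/
def IsROFMinimizer {V : Type*} [Fintype V] (E : Finset (V × V)) (f : V → ℝ) (α : ℝ)
    (u : V → ℝ) : Prop :=
  ∀ w : V → ℝ,
    (1 / 2) * (∑ v, (f v - u v) ^ 2) + α * tvJ E u ≤
      (1 / 2) * (∑ v, (f v - w v) ^ 2) + α * tvJ E w

/-- `u : [0,∞) → ℝ^V` is a TV flow solution with datum `f`: it is Lipschitz on `[0,∞)`,
`u(0) = f`, and `-u'(t) ∈ ∂J(u(t))` for almost every `t > 0`. -/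
def IsTVFlowSolution {V : Type*} [Fintype V] (E : Finset (V × V)) (f : V → ℝ)
    (u : ℝ → V → ℝ) : Prop :=
  u 0 = f ∧ (∃ L : NNReal, LipschitzOnWith L u (Set.Ici 0)) ∧
    ∃ u' : ℝ → V → ℝ, ∀ᵐ t ∂(volume : Measure ℝ), 0 < t →
      HasDerivAt u (u' t) t ∧ (fun v => -(u' t v)) ∈ subdiffJ E (u t)

lemma tvJ_nonneg {V : Type*} (E : Finset (V × V)) (u : V → ℝ) : 0 ≤ tvJ E u :=
  Finset.sum_nonneg fun _ _ => abs_nonneg _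

lemma edge_le_tvJ {V : Type*} {E : Finset (V × V)} (u : V → ℝ) {v w : V}
    (h : (v, w) ∈ E) : |u w - u v| ≤ tvJ E u :=
  Finset.single_le_sum (f := fun e => |u e.2 - u e.1|) (fun _ _ => abs_nonneg _) h

lemma walk_bound {V : Type*} [Fintype V] {E : Finset (V × V)} (u : V → ℝ)
    {x y : V} (p : (SimpleGraph.fromRel (fun a b => (a, b) ∈ E)).Walk x y) :
    |u x - u y| ≤ p.length * tvJ E u := by
  induction p with
  | nil => simp
  | @cons a b c h p ih =>
    have hab : |u a - u b| ≤ tvJ E u := by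
      rw [SimpleGraph.fromRel_adj] at h
      rcases h.2 with h' | h'
      · rw [abs_sub_comm]; exact edge_le_tvJ u h'
      · exact edge_le_tvJ u h'
    calc |u a - u c| ≤ |u a - u b| + |u b - u c| := abs_sub_le _ _ _
      _ ≤ tvJ E u + p.length * tvJ E u := add_le_add hab ih
      _ = (p.cons h).length * tvJ E u := by
          simp [SimpleGraph.Walk.length_cons]; ring

lemma osc_bound {V : Type*} [Fintype V] [DecidableEq V] {E : Finset (V × V)}
    (hconn : (SimpleGraph.fromRel (fun v w : V => (v, w) ∈ E)).Connected)
    (u : V → ℝ) (x y : V) :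
    |u x - u y| ≤ (Fintype.card V : ℝ) * tvJ E u := by
  obtain ⟨p⟩ := hconn.preconnected x y
  have h1 := walk_bound u p.toPath.1
  have h2 : (p.toPath.1.length : ℝ) ≤ (Fintype.card V : ℝ) := by
    exact_mod_cast (p.toPath.2.length_lt).le
  calc |u x - u y| ≤ p.toPath.1.length * tvJ E u := h1
    _ ≤ (Fintype.card V : ℝ) * tvJ E u :=
        mul_le_mul_of_nonneg_right h2 (tvJ_nonneg E u)


/-- for large enough regularization parameter, the ROF minimizer is the
constant function equal to the mean of the datum. -/
theorem rof_minimizer_eventually_mean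
    {V : Type*} [Fintype V] [DecidableEq V] [Nonempty V] (E : Finset (V × V))
    (hE : ∀ v w : V, (v, w) ∈ E → (w, v) ∉ E)
    (hconn : (SimpleGraph.fromRel (fun v w : V => (v, w) ∈ E)).Connected)
    (f : V → ℝ) :
    ∃ C : ℝ, 0 ≤ C ∧ ∀ α : ℝ, C ≤ α → ∀ uα : V → ℝ, IsROFMinimizer E f α uα →
      ∀ v : V, uα v = (1 / (Fintype.card V : ℝ)) * ∑ w, f w := by
  classical
  set n : ℝ := (Fintype.card V : ℝ) with hn_def
  have hn : 0 < n := by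
    simp only [hn_def]
    exact_mod_cast Fintype.card_pos (α := V)
  set c : ℝ := (1 / n) * ∑ w, f w with hc_def
  set g : V → ℝ := fun v => f v - c with hg_def
  have hgsum : ∑ v, g v = 0 := by
    simp only [hg_def, Finset.sum_sub_distrib, Finset.sum_const, Finset.card_univ,
      nsmul_eq_mul, hc_def]
    field_simp
    simp [hn_def]
  set A : ℝ := ∑ v, |g v| with hA_def
  have hA0 : 0 ≤ A := Finset.sum_nonneg fun _ _ => abs_nonneg _
  refine ⟨n * A, by positivity, ?_⟩
  intro α hα uα hu v
  have hα0 : 0 ≤ α := le_trans (by positivity) hα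
  set ub : V → ℝ := fun _ => c with hub_def
  have hJub : tvJ E ub = 0 := by simp [tvJ, hub_def]
  -- ub is a minimizer
  have hubmin : IsROFMinimizer E f α ub := by
    intro w
    set S : ℝ := tvJ E w with hS_def
    have hS0 : 0 ≤ S := tvJ_nonneg E w
    obtain ⟨v₀⟩ := ‹Nonempty V›
    have h2 : ∑ x, g x * w x = ∑ x, g x * (w x - w v₀) := by
      rw [show (∑ x, g x * (w x - w v₀)) = ∑ x, g x * w x - (∑ x, g x) * w v₀ by
        rw [Finset.sum_mul]; rw [← Finset.sum_sub_distrib]; congr 1; ext x; ring]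
      rw [hgsum]; ring
    have h3 : |∑ x, g x * (w x - w v₀)| ≤ A * (n * S) := by
      calc |∑ x, g x * (w x - w v₀)| ≤ ∑ x, |g x * (w x - w v₀)| :=
            Finset.abs_sum_le_sum_abs _ _
        _ = ∑ x, |g x| * |w x - w v₀| := by simp [abs_mul]
        _ ≤ ∑ x, |g x| * (n * S) := by
            refine Finset.sum_le_sum fun x _ => ?_
            exact mul_le_mul_of_nonneg_left (osc_bound hconn w x v₀) (abs_nonneg _)
        _ = A * (n * S) := by rw [← Finset.sum_mul]
    have hgw : |∑ x, g x * w x| ≤ A * (n * S) := h2 ▸ h3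
    have h1 : ∑ x, (f x - w x) ^ 2 =
        (∑ x, g x ^ 2) + (∑ x, (c - w x) ^ 2) - 2 * ∑ x, g x * w x := by
      have key : ∀ x, (f x - w x) ^ 2 =
          g x ^ 2 + (c - w x) ^ 2 - 2 * (g x * w x) + 2 * (g x * c) := by
        intro x; simp only [hg_def]; ring
      rw [Finset.sum_congr rfl fun x _ => key x]
      rw [Finset.sum_add_distrib, Finset.sum_sub_distrib, Finset.sum_add_distrib,
        ← Finset.mul_sum, ← Finset.mul_sum,
        show (∑ x, g x * c) = (∑ x, g x) * c by rw [Finset.sum_mul], hgsum]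
      ring
    have hfub : ∑ x, (f x - ub x) ^ 2 = ∑ x, g x ^ 2 := by
      simp [hub_def, hg_def]
    have hcw : 0 ≤ ∑ x, (c - w x) ^ 2 := Finset.sum_nonneg fun _ _ => sq_nonneg _
    have hαS : n * A * S ≤ α * S := mul_le_mul_of_nonneg_right hα hS0
    have habs := abs_le.1 hgw
    have hAnS : A * (n * S) = n * A * S := by ring
    rw [hfub, hJub]
    linarith [habs.2]
  -- uniqueness
  have hmin1 := hu ub
  have hmin2 := hubmin uα
  set mid : V → ℝ := fun x => (uα x + ub x) / 2 with hmid_def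
  have hJmid : tvJ E mid ≤ (tvJ E uα + tvJ E ub) / 2 := by
    simp only [tvJ, hmid_def]
    rw [← Finset.sum_add_distrib, Finset.sum_div]
    refine Finset.sum_le_sum fun e _ => ?_
    rw [show (uα e.2 + ub e.2) / 2 - (uα e.1 + ub e.1) / 2 =
      ((uα e.2 - uα e.1) + (ub e.2 - ub e.1)) / 2 by ring]
    have h2' : |((uα e.2 - uα e.1) + (ub e.2 - ub e.1)) / 2|
        = |(uα e.2 - uα e.1) + (ub e.2 - ub e.1)| / 2 := by
      rw [abs_div]; norm_num
    rw [h2']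
    linarith [abs_add_le (uα e.2 - uα e.1) (ub e.2 - ub e.1)]
  have hsq : ∑ x, (f x - mid x) ^ 2 =
      ((∑ x, (f x - uα x) ^ 2) + ∑ x, (f x - ub x) ^ 2) / 2
        - (∑ x, (uα x - ub x) ^ 2) / 4 := by
    have key : ∀ x, (f x - mid x) ^ 2 =
        ((f x - uα x) ^ 2 + (f x - ub x) ^ 2) / 2 - (uα x - ub x) ^ 2 / 4 := by
      intro x; simp only [hmid_def]; ring
    rw [Finset.sum_congr rfl fun x _ => key x]
    rw [Finset.sum_sub_distrib, ← Finset.sum_div, ← Finset.sum_div, Finset.sum_add_distrib]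
  have hmid := hu mid
  have hαJ : α * tvJ E mid ≤ α * ((tvJ E uα + tvJ E ub) / 2) :=
    mul_le_mul_of_nonneg_left hJmid hα0
  have hzero : ∑ x, (uα x - ub x) ^ 2 ≤ 0 := by linarith [hmid, hαJ, hmin1, hmin2, hsq]
  have heq : ∀ x, uα x = ub x := by
    intro x
    have hs : ∑ x, (uα x - ub x) ^ 2 = 0 :=
      le_antisymm hzero (Finset.sum_nonneg fun _ _ => sq_nonneg _)
    have := (Finset.sum_eq_zero_iff_of_nonneg (fun x _ => sq_nonneg (uα x - ub x))).1 hs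
      x (Finset.mem_univ x)
    have := sq_eq_zero_iff.1 this
    linarith
  rw [heq v]
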